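/- For any real numbers ε, γ, p with 0 ≤ ε < 1, γ ≥ 0, 0 < p ≤ 1, and q = 1−p, one has min{ pγ/2 + ln(1/(1+ε)), p·ln(1/(1−ε)) + q·ln(1/(1+ε)) } ≤ max{ 0, ln(1 + e^{γ/2}) − qγ/2 − ln 2 }. -/

import Mathlib

private lemma xlogx {x : ℝ} (hx : 0 < x) : x - 1 ≤ x * Real.log x := by
  have h := Real.log_le_sub_one_of_pos (inv_pos.mpr hx)
  rw [Real.log_inv] at h
  have h2 := mul_le_mul_of_nonneg_left h hx.le
  have hx' : x * x⁻¹ = 1 := mul_inv_cancel₀ hx.ne'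
  nlinarith

private lemma key1 {a : ℝ} (h0 : 0 ≤ a) (h1 : a < 1) :
    0 ≤ (1 + a) * Real.log (1 + a) + (1 - a) * Real.log (1 - a) := by
  have ha1 : (0:ℝ) < 1 + a := by linarith
  have ha2 : (0:ℝ) < 1 - a := by linarith
  have h3 := xlogx ha1
  have h4 := xlogx ha2
  linarith

private lemma cross {a b : ℝ} (ha : 0 ≤ a) (hab : a ≤ b) (hb : b < 1) :
    Real.log (1 + b) * (-Real.log (1 - a)) ≤ Real.log (1 + a) * (-Real.log (1 - b)) := by
  have ha1 : a < 1 := lt_of_le_of_lt hab hb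
  have hsa : 0 ≤ Real.log (1 + a) := Real.log_nonneg (by linarith)
  have hra : 0 ≤ -Real.log (1 - a) := by
    have : Real.log (1 - a) ≤ 0 := Real.log_nonpos (by linarith) (by linarith)
    linarith
  have hkey : (-Real.log (1 - a)) * (1 - a) ≤ Real.log (1 + a) * (1 + a) := by
    have := key1 ha ha1
    nlinarith
  set f : ℝ → ℝ := fun x =>
    Real.log (1 + a) * (-Real.log (1 - x)) - (-Real.log (1 - a)) * Real.log (1 + x) with hf
  have hderiv : ∀ x ∈ Set.Icc a b, HasDerivAt f
      (Real.log (1 + a) * (1 - x)⁻¹ - (-Real.log (1 - a)) * (1 + x)⁻¹) x := by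
    intro x hx
    have hx0 : 0 ≤ x := le_trans ha hx.1
    have hx1 : x < 1 := lt_of_le_of_lt hx.2 hb
    have h1 : HasDerivAt (fun y : ℝ => 1 - y) (-1) x := by
      exact (hasDerivAt_id x).const_sub 1
    have h2 : HasDerivAt (fun y : ℝ => 1 + y) 1 x := by
      exact (hasDerivAt_id x).const_add 1
    have hl1 : HasDerivAt (fun y : ℝ => Real.log (1 - y)) ((1 - x)⁻¹ * (-1)) x :=
      (Real.hasDerivAt_log (by linarith)).comp x h1
    have hl2 : HasDerivAt (fun y : ℝ => Real.log (1 + y)) ((1 + x)⁻¹ * 1) x :=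
      (Real.hasDerivAt_log (by linarith)).comp x h2
    have := ((hl1.neg.const_mul (Real.log (1 + a))).sub
      (hl2.const_mul (-Real.log (1 - a))))
    exact this.congr_deriv (by ring)
  have hmono : MonotoneOn f (Set.Icc a b) := by
    apply monotoneOn_of_deriv_nonneg (convex_Icc a b)
    · exact fun x hx => ((hderiv x hx).continuousAt).continuousWithinAt
    · intro x hx
      rw [interior_Icc] at hx
      exact ((hderiv x (Set.Ioo_subset_Icc_self hx)).differentiableAt).differentiableWithinAt
    · intro x hx
      rw [interior_Icc] at hx
      have hd := (hderiv x (Set.Ioo_subset_Icc_self hx)).deriv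
      rw [hd]
      have hx0 : 0 ≤ x := le_trans ha hx.1.le
      have hx1 : x < 1 := lt_of_lt_of_le hx.2 hb.le
      have hxa : a ≤ x := hx.1.le
      have hmain : (-Real.log (1 - a)) * (1 - x) ≤ Real.log (1 + a) * (1 + x) := by
        nlinarith [mul_nonneg hsa (sub_nonneg.2 hxa), mul_nonneg hra (sub_nonneg.2 hxa)]
      have h1x : (0:ℝ) < 1 - x := by linarith
      have h2x : (0:ℝ) < 1 + x := by linarith
      have h := (div_le_div_iff₀ h2x h1x).mpr hmain
      rw [sub_nonneg]
      simpa [div_eq_mul_inv] using h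
  have hfa : f a = 0 := by simp only [hf]; ring
  have hfb := hmono (Set.left_mem_Icc.mpr hab) (Set.right_mem_Icc.mpr hab) hab
  rw [hfa] at hfb
  simp only [hf] at hfb
  linarith

private lemma alg {p D s T sstar : ℝ} (h1 : s ≤ p * D) (h2 : D ≤ T)
    (h3 : sstar * D ≤ s * T) (h4 : 0 < D) : p * D - s ≤ p * T - sstar := by
  nlinarith [mul_le_mul_of_nonneg_right h1 (sub_nonneg.2 h2)]

/-- Lemma 6.5: for `0 ≤ ε < 1`, `γ ≥ 0`, `0 < p ≤ 1` and `q = 1 - p`,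
`min{pγ/2 + ln(1/(1+ε)), p·ln(1/(1-ε)) + q·ln(1/(1+ε))}
  ≤ max{0, ln(1+e^{γ/2}) - qγ/2 - ln 2}`. -/
theorem stmt14 (ε γ p : ℝ) (hε0 : 0 ≤ ε) (hε1 : ε < 1) (hγ : 0 ≤ γ)
    (hp0 : 0 < p) (hp1 : p ≤ 1) :
    min (p * γ / 2 + Real.log (1 / (1 + ε)))
        (p * Real.log (1 / (1 - ε)) + (1 - p) * Real.log (1 / (1 + ε))) ≤
      max 0 (Real.log (1 + Real.exp (γ / 2)) - (1 - p) * γ / 2 - Real.log 2) := by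
  have hε1' : (0:ℝ) < 1 - ε := by linarith
  have hε0' : (0:ℝ) < 1 + ε := by linarith
  set x := Real.exp (γ / 2) with hxdef
  have hx1 : 1 ≤ x := Real.one_le_exp (by linarith)
  have hlogx : Real.log x = γ / 2 := Real.log_exp _
  have hx0 : (0:ℝ) < x := by linarith
  have h1x : (0:ℝ) < 1 + x := by linarith
  rw [one_div, one_div, Real.log_inv, Real.log_inv]
  have hs : 0 ≤ Real.log (1 + ε) := Real.log_nonneg (by linarith)
  have hr : 0 ≤ -Real.log (1 - ε) := by
    have : Real.log (1 - ε) ≤ 0 := Real.log_nonpos (by linarith) (by linarith)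
    linarith
  rcases le_or_gt (2 * x) ((1 + ε) * (1 + x)) with hcase | hcase
  · -- Case 1: first term of min works
    refine le_trans (min_le_left _ _) (le_trans ?_ (le_max_right _ _))
    have hlog : Real.log (2 * x) ≤ Real.log ((1 + ε) * (1 + x)) :=
      Real.log_le_log (by positivity) hcase
    rw [Real.log_mul two_ne_zero hx0.ne', Real.log_mul hε0'.ne' h1x.ne', hlogx] at hlog
    have hring : p * γ / 2 + (1 - p) * γ / 2 = γ / 2 := by ring
    linarith
  · -- Case 2
    have hεx : ε * (1 + x) < x - 1 := by nlinarith
    have hDt : -Real.log (1 - ε) + Real.log (1 + ε) ≤ γ / 2 := by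
      have harg : (1 + ε) / (1 - ε) ≤ x := by
        rw [div_le_iff₀ hε1']
        nlinarith
      have := Real.log_le_log (by positivity) harg
      rw [Real.log_div hε0'.ne' hε1'.ne', hlogx] at this
      linarith
    rcases le_or_gt (p * (-Real.log (1 - ε) + Real.log (1 + ε))) (Real.log (1 + ε))
      with h2a | h2b
    · -- second term ≤ 0
      refine le_trans (min_le_right _ _) (le_trans ?_ (le_max_left _ _))
      nlinarith
    · -- second term ≤ C
      refine le_trans (min_le_right _ _) (le_trans ?_ (le_max_right _ _))
      have hD0 : 0 < -Real.log (1 - ε) + Real.log (1 + ε) := by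
        by_contra h
        push_neg at h
        nlinarith
      set e : ℝ := (x - 1) / (x + 1) with hedef
      have hx1' : (0:ℝ) < x + 1 := by linarith
      have he0 : 0 ≤ e := div_nonneg (by linarith) (by linarith)
      have he1 : e < 1 := by rw [hedef, div_lt_one hx1']; linarith
      have hεe : ε ≤ e := by rw [hedef, le_div_iff₀ hx1']; nlinarith
      have h1pe : 1 + e = 2 * x / (x + 1) := by
        rw [hedef, eq_div_iff hx1'.ne', add_mul, div_mul_cancel₀ _ hx1'.ne']; ring
      have h1me : 1 - e = 2 / (x + 1) := by
        rw [hedef, eq_div_iff hx1'.ne', sub_mul, div_mul_cancel₀ _ hx1'.ne']; ring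
      have hsstar : Real.log (1 + e) = Real.log 2 + γ / 2 - Real.log (1 + x) := by
        rw [h1pe, Real.log_div (by positivity) hx1'.ne',
          Real.log_mul two_ne_zero hx0.ne', hlogx, add_comm x 1]
      have hrstar : -Real.log (1 - e) = Real.log (1 + x) - Real.log 2 := by
        rw [h1me, Real.log_div two_ne_zero hx1'.ne', add_comm x 1]
        ring
      have hcross := cross hε0 hεe he1
      -- sstar * D ≤ s * T
      have h3 : Real.log (1 + e) * (-Real.log (1 - ε) + Real.log (1 + ε)) ≤
          Real.log (1 + ε) * (γ / 2) := by
        have hsum : -Real.log (1 - e) + Real.log (1 + e) = γ / 2 := by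
          rw [hrstar, hsstar]; ring
        nlinarith
      have halg := alg h2b.le hDt h3 hD0
      have hexp : p * (-Real.log (1 - ε) + Real.log (1 + ε)) =
          p * -Real.log (1 - ε) + (1 - p) * -Real.log (1 + ε) + Real.log (1 + ε) := by ring
      have hring : (1 - p) * γ / 2 = γ / 2 - p * (γ / 2) := by ring
      linarith
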